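/- If Null(Φ) ∩ 𝒦 ∩ 𝒫 = {0}, then the sublevel set {Θ ∈ 𝒦 ∩ 𝒫 : ‖Y − ΦΘ‖_F ≤ ‖Y‖_F} is a compact subset of the space of real n×L matrices. -/

import Mathlib

/-- Frobenius norm of a real matrix. -/
noncomputable def frob {a b : ℕ} (A : Matrix (Fin a) (Fin b) ℝ) : ℝ :=
  Real.sqrt (∑ i, ∑ j, (A i j) ^ 2)

/-- The set of a×b matrices whose every column has at most k nonzero entries. -/
def colSparse (a b k : ℕ) : Set (Matrix (Fin a) (Fin b) ℝ) :=
  {Θ | ∀ l, ({i | Θ i l ≠ 0} : Set (Fin a)).ncard ≤ k}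

/-- The set of a×b matrices having at most p nonzero rows. -/
def rowSparse (a b p : ℕ) : Set (Matrix (Fin a) (Fin b) ℝ) :=
  {Θ | ({i | ∃ l, Θ i l ≠ 0} : Set (Fin a)).ncard ≤ p}

attribute [local instance] Matrix.frobeniusNormedAddCommGroup Matrix.frobeniusNormedSpace

lemma frob_eq_norm {a b : ℕ} (A : Matrix (Fin a) (Fin b) ℝ) : frob A = ‖A‖ := by
  rw [frob, Matrix.frobenius_norm_def, ← Real.sqrt_eq_rpow]
  congr 1
  apply Finset.sum_congr rfl; intro i _; apply Finset.sum_congr rfl; intro j _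
  rw [Real.norm_eq_abs, Real.rpow_two, sq_abs]

/-- The submodule of matrices supported in a given pattern `S`. -/
def suppSub (n L : ℕ) (S : Finset (Fin n × Fin L)) :
    Submodule ℝ (Matrix (Fin n) (Fin L) ℝ) where
  carrier := {Θ | ∀ i l, (i, l) ∉ S → Θ i l = 0}
  add_mem' := by intro X Z hX hZ i l h; simp [Matrix.add_apply, hX i l h, hZ i l h]
  zero_mem' := by intro i l _; rfl
  smul_mem' := by intro c X hX i l h; simp [Matrix.smul_apply, hX i l h]

def adm (n L k p : ℕ) (S : Finset (Fin n × Fin L)) : Prop :=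
  (∀ l, (S.filter (fun q => q.2 = l)).card ≤ k) ∧ (S.image Prod.fst).card ≤ p

lemma suppSub_subset_sparse {n L k p : ℕ} {S : Finset (Fin n × Fin L)} (hS : adm n L k p S)
    {Θ : Matrix (Fin n) (Fin L) ℝ} (hΘ : Θ ∈ suppSub n L S) :
    Θ ∈ colSparse n L k ∩ rowSparse n L p := by
  constructor
  · intro l
    have hsub : {i | Θ i l ≠ 0} ⊆ ((S.filter (fun q => q.2 = l)).image Prod.fst : Finset (Fin n)) := by
      intro i hi
      simp only [Finset.coe_image, Set.mem_image, Finset.mem_coe, Finset.mem_filter]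
      exact ⟨(i, l), ⟨by_contra fun h => hi (hΘ i l h), rfl⟩, rfl⟩
    calc ({i | Θ i l ≠ 0} : Set (Fin n)).ncard
        ≤ (((S.filter (fun q => q.2 = l)).image Prod.fst : Finset (Fin n)) : Set (Fin n)).ncard :=
          Set.ncard_le_ncard hsub (Finset.finite_toSet _)
      _ = ((S.filter (fun q => q.2 = l)).image Prod.fst).card := Set.ncard_coe_finset _
      _ ≤ (S.filter (fun q => q.2 = l)).card := Finset.card_image_le
      _ ≤ k := hS.1 l
  · have hsub : {i | ∃ l, Θ i l ≠ 0} ⊆ ((S.image Prod.fst : Finset (Fin n)) : Set (Fin n)) := by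
      rintro i ⟨l, hl⟩
      simp only [Finset.coe_image, Set.mem_image, Finset.mem_coe]
      exact ⟨(i, l), by_contra fun h => hl (hΘ i l h), rfl⟩
    calc ({i | ∃ l, Θ i l ≠ 0} : Set (Fin n)).ncard
        ≤ _ := Set.ncard_le_ncard hsub (Finset.finite_toSet _)
      _ = (S.image Prod.fst).card := Set.ncard_coe_finset _
      _ ≤ p := hS.2

lemma sparse_mem_suppSub {n L k p : ℕ} {Θ : Matrix (Fin n) (Fin L) ℝ}
    (hΘ : Θ ∈ colSparse n L k ∩ rowSparse n L p) :
    ∃ S : Finset (Fin n × Fin L), adm n L k p S ∧ Θ ∈ suppSub n L S := by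
  refine ⟨Finset.univ.filter (fun q => Θ q.1 q.2 ≠ 0), ⟨?_, ?_⟩, ?_⟩
  · intro l
    have : ((Finset.univ.filter (fun q : Fin n × Fin L => Θ q.1 q.2 ≠ 0)).filter
        (fun q => q.2 = l)).card = ((Finset.univ.filter (fun i : Fin n => Θ i l ≠ 0)).image
          (fun i => (i, l))).card := by
      congr 1
      ext q
      simp only [Finset.mem_filter, Finset.mem_image, Finset.mem_univ, true_and]
      constructor
      · rintro ⟨hne, hq⟩; exact ⟨q.1, by subst hq; exact ⟨hne, rfl⟩⟩
      · rintro ⟨i, hi, rfl⟩; exact ⟨hi, rfl⟩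
    rw [this, Finset.card_image_of_injective _ (fun a b h => by simpa using congrArg Prod.fst h)]
    calc (Finset.univ.filter (fun i : Fin n => Θ i l ≠ 0)).card
        = ({i | Θ i l ≠ 0} : Set (Fin n)).ncard := by
          rw [← Set.ncard_coe_finset]; congr 1; ext i; simp
      _ ≤ k := hΘ.1 l
  · classical
    have hsub : (Finset.univ.filter (fun q : Fin n × Fin L => Θ q.1 q.2 ≠ 0)).image Prod.fst
        ⊆ Set.toFinset {i | ∃ l, Θ i l ≠ 0} := by
      intro i hi
      simp only [Finset.mem_image, Finset.mem_filter, Finset.mem_univ, true_and] at hi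
      obtain ⟨q, hq, rfl⟩ := hi
      simp only [Set.mem_toFinset, Set.mem_setOf_eq]
      exact ⟨q.2, hq⟩
    calc _ ≤ (Set.toFinset {i | ∃ l, Θ i l ≠ 0}).card := Finset.card_le_card hsub
      _ = ({i | ∃ l, Θ i l ≠ 0} : Set (Fin n)).ncard := by
          rw [Set.ncard_eq_toFinset_card']
      _ ≤ p := hΘ.2
  · intro i l h
    by_contra hne
    exact h (by simp [hne])

set_option maxHeartbeats 2000000 in
theorem stmt_16 (m n L k p : ℕ) (hm : 0 < m) (hn : 0 < n) (hL : 0 < L)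
    (hk : 0 < k) (hp : 0 < p)
    (Φ : Matrix (Fin m) (Fin n) ℝ) (Y : Matrix (Fin m) (Fin L) ℝ)
    (hnull : {Θ : Matrix (Fin n) (Fin L) ℝ | Φ * Θ = 0} ∩ colSparse n L k ∩ rowSparse n L p
      = {0}) :
    IsCompact {Θ : Matrix (Fin n) (Fin L) ℝ |
      Θ ∈ colSparse n L k ∩ rowSparse n L p ∧ frob (Y - Φ * Θ) ≤ frob Y} := by
  -- rewrite as finite union over admissible patterns
  have hunion : {Θ : Matrix (Fin n) (Fin L) ℝ |
      Θ ∈ colSparse n L k ∩ rowSparse n L p ∧ frob (Y - Φ * Θ) ≤ frob Y}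
      = ⋃ S : {S : Finset (Fin n × Fin L) // adm n L k p S},
          ((suppSub n L S.1 : Set (Matrix (Fin n) (Fin L) ℝ))
            ∩ {Θ | frob (Y - Φ * Θ) ≤ frob Y}) := by
    ext Θ
    simp only [Set.mem_setOf_eq, Set.mem_iUnion, Set.mem_inter_iff, SetLike.mem_coe]
    constructor
    · rintro ⟨hΘ, hle⟩
      obtain ⟨S, hS, hmem⟩ := sparse_mem_suppSub hΘ
      exact ⟨⟨S, hS⟩, hmem, hle⟩
    · rintro ⟨⟨S, hS⟩, hmem, hle⟩
      exact ⟨suppSub_subset_sparse hS hmem, hle⟩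
  rw [hunion]
  apply isCompact_iUnion
  rintro ⟨S, hS⟩
  -- each piece is closed and bounded
  set V := suppSub n L S with hV
  -- the multiplication map restricted to V is injective
  let f : V →ₗ[ℝ] Matrix (Fin m) (Fin L) ℝ :=
    { toFun := fun Θ => Φ * (Θ : Matrix (Fin n) (Fin L) ℝ)
      map_add' := fun X Z => by simp [Matrix.mul_add]
      map_smul' := fun c X => by simp [Matrix.mul_smul] }
  have hker : LinearMap.ker f = ⊥ := by
    rw [LinearMap.ker_eq_bot']
    rintro ⟨Θ, hΘ⟩ hfΘ
    have h0 : Φ * Θ = 0 := hfΘ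
    have hsp := suppSub_subset_sparse hS hΘ
    have : Θ ∈ ({0} : Set (Matrix (Fin n) (Fin L) ℝ)) := by
      rw [← hnull]; exact ⟨⟨h0, hsp.1⟩, hsp.2⟩
    simpa using this
  obtain ⟨K, hKpos, hK⟩ := f.exists_antilipschitzWith hker
  -- boundedness
  have hbound : ∀ Θ ∈ ((V : Set (Matrix (Fin n) (Fin L) ℝ))
      ∩ {Θ | frob (Y - Φ * Θ) ≤ frob Y}), ‖Θ‖ ≤ K * (2 * ‖Y‖) := by
    rintro Θ ⟨hΘV, hΘle⟩
    have h1 : ‖Φ * Θ‖ ≤ 2 * ‖Y‖ := by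
      have : Φ * Θ = Y - (Y - Φ * Θ) := (sub_sub_cancel Y (Φ * Θ)).symm
      rw [this]
      calc ‖Y - (Y - Φ * Θ)‖ ≤ ‖Y‖ + ‖Y - Φ * Θ‖ := norm_sub_le _ _
        _ ≤ ‖Y‖ + ‖Y‖ := by
            have h := hΘle
            simp only [Set.mem_setOf_eq, frob_eq_norm] at h
            linarith
        _ = 2 * ‖Y‖ := by ring
    have h2 : ‖(⟨Θ, hΘV⟩ : V)‖ ≤ K * ‖f ⟨Θ, hΘV⟩‖ := by
      have := hK.le_mul_dist (⟨Θ, hΘV⟩ : V) 0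
      simpa [dist_eq_norm] using this
    have h3 : ‖f (⟨Θ, hΘV⟩ : V)‖ = ‖Φ * Θ‖ := rfl
    have h4 : ‖(⟨Θ, hΘV⟩ : V)‖ = ‖Θ‖ := rfl
    rw [h3, h4] at h2
    calc ‖Θ‖ ≤ K * ‖Φ * Θ‖ := h2
      _ ≤ K * (2 * ‖Y‖) := by
          exact mul_le_mul_of_nonneg_left h1 (by positivity)
  -- closedness
  have hclosed : IsClosed ((V : Set (Matrix (Fin n) (Fin L) ℝ))
      ∩ {Θ | frob (Y - Φ * Θ) ≤ frob Y}) := by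
    apply IsClosed.inter
    · exact Submodule.closed_of_finiteDimensional V
    · have hcont : Continuous fun Θ : Matrix (Fin n) (Fin L) ℝ => frob (Y - Φ * Θ) := by
        simp only [frob_eq_norm]
        let g : Matrix (Fin n) (Fin L) ℝ →ₗ[ℝ] Matrix (Fin m) (Fin L) ℝ :=
          { toFun := fun Θ : Matrix (Fin n) (Fin L) ℝ => Φ * Θ
            map_add' := fun X Z => Matrix.mul_add Φ X Z
            map_smul' := fun c X => Matrix.mul_smul Φ c X }
        have : Continuous fun Θ : Matrix (Fin n) (Fin L) ℝ => Φ * Θ :=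
          g.continuous_of_finiteDimensional
        exact (continuous_const.sub this).norm
      exact isClosed_le hcont continuous_const
  exact Metric.isCompact_of_isClosed_isBounded hclosed
    (isBounded_iff_forall_norm_le.2 ⟨K * (2 * ‖Y‖), hbound⟩)
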